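/- Let φ : ℝ² → [0,∞) be a norm and let X ∈ ℝ² with φ(X) = 1. Then there exist Y, Z ∈ ℝ² with Y ≠ Z, φ(Y) = φ(Z) = 1 and X + Y + Z = 0. -/

import Mathlib

noncomputable section
open Set

abbrev E2 : Type := EuclideanSpace ℝ (Fin 2)

section Aux

lemma phi_zero (φ : E2 → ℝ) (hφ_hom : ∀ (c : ℝ) (x : E2), φ (c • x) = |c| * φ x) :
    φ 0 = 0 := by
  have := hφ_hom 0 0
  simpa using this

lemma phi_neg (φ : E2 → ℝ) (hφ_hom : ∀ (c : ℝ) (x : E2), φ (c • x) = |c| * φ x) (x : E2) :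
    φ (-x) = φ x := by
  have := hφ_hom (-1) x
  simpa using this

lemma phi_nonneg (φ : E2 → ℝ)
    (hφ_triangle : ∀ x y : E2, φ (x + y) ≤ φ x + φ y)
    (hφ_hom : ∀ (c : ℝ) (x : E2), φ (c • x) = |c| * φ x) (x : E2) :
    0 ≤ φ x := by
  have h := hφ_triangle x (-x)
  rw [add_neg_cancel, phi_zero φ hφ_hom, phi_neg φ hφ_hom] at h
  linarith

lemma abs_apply_le (x : E2) (i : Fin 2) : |x i| ≤ ‖x‖ := by
  have h := abs_real_inner_le_norm (EuclideanSpace.single i (1:ℝ)) x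
  simpa [EuclideanSpace.inner_single_left, EuclideanSpace.norm_single] using h

lemma phi_decomp (x : E2) :
    x = x 0 • EuclideanSpace.single (0 : Fin 2) (1:ℝ)
      + x 1 • EuclideanSpace.single (1 : Fin 2) (1:ℝ) := by
  ext i
  fin_cases i <;> simp [EuclideanSpace.single_apply]

lemma phi_continuous (φ : E2 → ℝ)
    (hφ_triangle : ∀ x y : E2, φ (x + y) ≤ φ x + φ y)
    (hφ_hom : ∀ (c : ℝ) (x : E2), φ (c • x) = |c| * φ x) :
    Continuous φ := by
  set C : ℝ := φ (EuclideanSpace.single (0 : Fin 2) (1:ℝ))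
    + φ (EuclideanSpace.single (1 : Fin 2) (1:ℝ)) with hC
  have hC0 : 0 ≤ C :=
    add_nonneg (phi_nonneg φ hφ_triangle hφ_hom _) (phi_nonneg φ hφ_triangle hφ_hom _)
  have hbound : ∀ x : E2, φ x ≤ C * ‖x‖ := by
    intro x
    have h0 : φ x ≤ |x 0| * φ (EuclideanSpace.single (0 : Fin 2) (1:ℝ))
        + |x 1| * φ (EuclideanSpace.single (1 : Fin 2) (1:ℝ)) := by
      calc φ x = φ (x 0 • EuclideanSpace.single (0 : Fin 2) (1:ℝ)
            + x 1 • EuclideanSpace.single (1 : Fin 2) (1:ℝ)) := by rw [← phi_decomp x]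
        _ ≤ φ (x 0 • EuclideanSpace.single (0 : Fin 2) (1:ℝ))
            + φ (x 1 • EuclideanSpace.single (1 : Fin 2) (1:ℝ)) := hφ_triangle _ _
        _ = _ := by rw [hφ_hom, hφ_hom]
    have h1 : |x 0| ≤ ‖x‖ := abs_apply_le x 0
    have h2 : |x 1| ≤ ‖x‖ := abs_apply_le x 1
    have p0 := phi_nonneg φ hφ_triangle hφ_hom (EuclideanSpace.single (0 : Fin 2) (1:ℝ))
    have p1 := phi_nonneg φ hφ_triangle hφ_hom (EuclideanSpace.single (1 : Fin 2) (1:ℝ))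
    calc φ x ≤ |x 0| * φ (EuclideanSpace.single (0 : Fin 2) (1:ℝ))
        + |x 1| * φ (EuclideanSpace.single (1 : Fin 2) (1:ℝ)) := h0
      _ ≤ ‖x‖ * φ (EuclideanSpace.single (0 : Fin 2) (1:ℝ))
        + ‖x‖ * φ (EuclideanSpace.single (1 : Fin 2) (1:ℝ)) := by
          gcongr
      _ = C * ‖x‖ := by rw [hC]; ring
  have hlip : LipschitzWith (Real.toNNReal C) φ := by
    apply LipschitzWith.of_dist_le_mul
    intro x y
    rw [Real.dist_eq, dist_eq_norm]
    have hxy : φ x - φ y ≤ φ (x - y) := by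
      have := hφ_triangle (x - y) y
      simpa using this
    have hyx : φ y - φ x ≤ φ (x - y) := by
      have := hφ_triangle (y - x) x
      have h2 : φ (y - x) = φ (x - y) := by
        rw [show y - x = -(x - y) by abel, phi_neg φ hφ_hom]
      simp only [sub_add_cancel] at this
      linarith
    have habs : |φ x - φ y| ≤ φ (x - y) := abs_sub_le_iff.mpr ⟨hxy, hyx⟩
    calc |φ x - φ y| ≤ φ (x - y) := habs
      _ ≤ C * ‖x - y‖ := hbound _
      _ = (Real.toNNReal C : ℝ) * ‖x - y‖ := by rw [Real.coe_toNNReal C hC0]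
  exact hlip.continuous

end Aux

/-- Existence part of Lemma 4.11 of the paper (Lemma 2.16 of
Bellettini–Chambolle–Novaga): every unit vector of a norm on the plane can be
completed to an admissible triplet by two distinct unit vectors. -/
theorem admissible_triplet_exists
    (φ : E2 → ℝ)
    (hφ_triangle : ∀ x y : E2, φ (x + y) ≤ φ x + φ y)
    (hφ_hom : ∀ (c : ℝ) (x : E2), φ (c • x) = |c| * φ x)
    (hφ_pos : ∀ x : E2, φ x = 0 → x = 0)
    (X : E2) (hX : φ X = 1) :
    ∃ Y Z : E2, Y ≠ Z ∧ φ Y = 1 ∧ φ Z = 1 ∧ X + Y + Z = 0 := by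
  have hφcont : Continuous φ := phi_continuous φ hφ_triangle hφ_hom
  have hXne : X ≠ 0 := by
    intro h
    rw [h, phi_zero φ hφ_hom] at hX
    norm_num at hX
  -- the rotated vector
  set W : E2 := (EuclideanSpace.equiv (Fin 2) ℝ).symm ![-(X 1), X 0] with hW
  have hW0 : W 0 = -(X 1) := rfl
  have hW1 : W 1 = X 0 := rfl
  -- the path
  set r : ℝ → E2 := fun t => Real.cos t • (-X) + Real.sin t • W with hr
  have hrcont : Continuous r := by
    exact (Real.continuous_cos.smul continuous_const).add
      (Real.continuous_sin.smul continuous_const)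
  have hXsq : X 0 ^ 2 + X 1 ^ 2 ≠ 0 := by
    intro h
    apply hXne
    have h0 : X 0 = 0 ∧ X 1 = 0 := by
      constructor <;> nlinarith [sq_nonneg (X 0), sq_nonneg (X 1)]
    ext i
    fin_cases i <;> simp [h0.1, h0.2]
  have hrne : ∀ t ∈ Icc (0:ℝ) Real.pi, r t ≠ 0 := by
    intro t _ h
    have h0 : Real.cos t * (-(X 0)) + Real.sin t * W 0 = 0 := congrArg (fun v : E2 => v 0) h
    have h1 : Real.cos t * (-(X 1)) + Real.sin t * W 1 = 0 := congrArg (fun v : E2 => v 1) h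
    rw [hW0] at h0; rw [hW1] at h1
    -- sin t * (X0² + X1²) = 0
    have hsin : Real.sin t = 0 := by
      have key : Real.sin t * (X 0 ^ 2 + X 1 ^ 2) = 0 := by
        linear_combination (-(X 1)) * h0 + X 0 * h1
      rcases mul_eq_zero.mp key with hs | hs
      · exact hs
      · exact absurd hs hXsq
    apply hXne
    have hc : Real.cos t ≠ 0 := by
      intro hc
      have := Real.sin_sq_add_cos_sq t
      rw [hsin, hc] at this
      norm_num at this
    rw [hsin] at h0 h1
    simp only [zero_mul, add_zero] at h0 h1
    have e0 : X 0 = 0 := by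
      have := mul_eq_zero.mp h0
      rcases this with h'|h'
      · exact absurd h' hc
      · linarith
    have e1 : X 1 = 0 := by
      have := mul_eq_zero.mp h1
      rcases this with h'|h'
      · exact absurd h' hc
      · linarith
    ext i
    fin_cases i <;> simp [e0, e1]
  have hφrpos : ∀ t ∈ Icc (0:ℝ) Real.pi, 0 < φ (r t) := by
    intro t ht
    rcases lt_or_eq_of_le (phi_nonneg φ hφ_triangle hφ_hom (r t)) with h | h
    · exact h
    · exact absurd (hφ_pos (r t) h.symm) (hrne t ht)
  -- the normalized path
  set Y : ℝ → E2 := fun t => (φ (r t))⁻¹ • r t with hYdef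
  have hYunit : ∀ t ∈ Icc (0:ℝ) Real.pi, φ (Y t) = 1 := by
    intro t ht
    have hpos := hφrpos t ht
    rw [hYdef]
    simp only
    rw [hφ_hom, abs_of_pos (inv_pos.mpr hpos), inv_mul_cancel₀ hpos.ne']
  -- the function for IVT
  set g : ℝ → ℝ := fun t => φ (-X - Y t) with hg
  have hgcont : ContinuousOn g (Icc 0 Real.pi) := by
    apply hφcont.comp_continuousOn
    apply ContinuousOn.sub continuousOn_const
    exact ContinuousOn.smul
      ((hφcont.comp hrcont).continuousOn.inv₀ (fun t ht => (hφrpos t ht).ne'))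
      hrcont.continuousOn
  have hr0 : r 0 = -X := by
    rw [hr]; simp
  have hrpi : r Real.pi = X := by
    rw [hr]; simp
  have hg0 : g 0 = 0 := by
    have : Y 0 = -X := by
      rw [hYdef]; simp only [hr0, phi_neg φ hφ_hom, hX]; norm_num
    rw [hg]; simp only [this]
    rw [show -X - -X = (0 : E2) by abel]
    exact phi_zero φ hφ_hom
  have hgpi : g Real.pi = 2 := by
    have hYpi : Y Real.pi = X := by
      rw [hYdef]; simp only [hrpi, hX]; norm_num
    rw [hg]; simp only [hYpi]
    rw [show -X - X = (-2 : ℝ) • X by module]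
    rw [hφ_hom, hX]
    norm_num
  have hmem : (1:ℝ) ∈ Icc (g 0) (g Real.pi) := by
    rw [hg0, hgpi]; norm_num
  have := intermediate_value_Icc Real.pi_nonneg hgcont hmem
  obtain ⟨t, ht, hgt⟩ := this
  refine ⟨Y t, -X - Y t, ?_, hYunit t ht, hgt, by abel⟩
  intro h
  have hsum : Y t + Y t = -X := by nth_rewrite 1 [h]; abel
  have h2 : φ ((-2 : ℝ) • Y t) = φ X := by
    congr 1
    rw [neg_smul, two_smul, hsum, neg_neg]
  rw [hφ_hom, hX, hYunit t ht] at h2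
  norm_num at h2
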